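/- There exists a tripartite no-signaling box P(a,b,c|x,y,z) with inputs x ∈ {1,2,3}, y ∈ {1,2}, z ∈ {1} and outcomes a, b, c ∈ {−1,+1}² such that the expression ⟨A_1^{10}B_1^{10}⟩ + ⟨A_1^{01}B_2^{10}⟩ + ⟨A_1^{11}C_1^{10}⟩ + ⟨A_2^{10}B_1^{01}⟩ + ⟨A_2^{01}B_2^{01}⟩ + ⟨A_2^{11}C_1^{01}⟩ + ⟨A_3^{10}B_1^{11}⟩ + ⟨A_3^{01}B_2^{11}⟩ − ⟨A_3^{11}C_1^{11}⟩ attains its algebraic maximum 9, where for outcome pairs a = (a_0,a_1), the symbol A^{ij} denotes (a_0)^i (a_1)^j (and analogously for B and C), and each correlator ⟨A_x^{..} B_y^{..}⟩ (resp. ⟨A_x^{..} C_1^{..}⟩) is the expectation of the product of the indicated bit-combinations under the appropriate marginal of P. -/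

import Mathlib

/-- The two-element set of outcomes `{−1, +1}` (as a subtype of `ℤ`). -/
abbrev Sgn : Type := ({-1, 1} : Finset ℤ)

/-- An outcome consisting of a pair of `±1`-valued bits. -/
abbrev Pair : Type := Sgn × Sgn

/-- The bit-combination `(a₀)^i (a₁)^j` of an outcome pair `a = (a₀, a₁)`. -/
def bits (a : Pair) (i j : ℕ) : ℤ := (a.1 : ℤ) ^ i * (a.2 : ℤ) ^ j

/-- A tripartite no-signaling box with inputs `x ∈ {1,2,3}`, `y ∈ {1,2}`, `z ∈ {1}`
and outcomes that are pairs of `±1`-valued bits: nonnegative, normalized, and such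
that the marginal distribution of the outcomes of any subset of the parties is
independent of the inputs of the remaining parties. -/
structure CabelloBox where
  P : Fin 3 → Fin 2 → Fin 1 → Pair → Pair → Pair → ℝ
  nonneg : ∀ x y z a b c, 0 ≤ P x y z a b c
  normalized : ∀ x y z, ∑ a : Pair, ∑ b : Pair, ∑ c : Pair, P x y z a b c = 1
  nsAB : ∀ x y z z' a b, ∑ c : Pair, P x y z a b c = ∑ c : Pair, P x y z' a b c
  nsAC : ∀ x y y' z a c, ∑ b : Pair, P x y z a b c = ∑ b : Pair, P x y' z a b c
  nsBC : ∀ x x' y z b c, ∑ a : Pair, P x y z a b c = ∑ a : Pair, P x' y z a b c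
  nsA : ∀ x y y' z z' a,
    ∑ b : Pair, ∑ c : Pair, P x y z a b c = ∑ b : Pair, ∑ c : Pair, P x y' z' a b c
  nsB : ∀ x x' y z z' b,
    ∑ a : Pair, ∑ c : Pair, P x y z a b c = ∑ a : Pair, ∑ c : Pair, P x' y z' a b c
  nsC : ∀ x x' y y' z c,
    ∑ a : Pair, ∑ b : Pair, P x y z a b c = ∑ a : Pair, ∑ b : Pair, P x' y' z a b c

/-- The correlator `⟨A_x^{ij} B_y^{kl}⟩`: the expectation of the product of the
indicated bit-combinations of Alice's and Bob's outcomes (Charlie's input is the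
unique `z = 1`). -/
def CabelloBox.corrAB (B : CabelloBox) (x : Fin 3) (y : Fin 2) (i j k l : ℕ) : ℝ :=
  ∑ a : Pair, ∑ b : Pair, ∑ c : Pair,
    ((bits a i j * bits b k l : ℤ) : ℝ) * B.P x y 0 a b c

/-- The correlator `⟨A_x^{ij} C_1^{kl}⟩`: the expectation of the product of the
indicated bit-combinations of Alice's and Charlie's outcomes (independent of Bob's
input by no-signaling, here evaluated at `y = 1`). -/
def CabelloBox.corrAC (B : CabelloBox) (x : Fin 3) (i j k l : ℕ) : ℝ :=
  ∑ a : Pair, ∑ b : Pair, ∑ c : Pair,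
    ((bits a i j * bits c k l : ℤ) : ℝ) * B.P x 0 0 a b c

def mA (y : Fin 2) (a : Pair) : ℤ := if y = 0 then a.1 else a.2
def mB (x : Fin 3) (b : Pair) : ℤ := if x = 0 then b.1 else if x = 1 then b.2 else b.1 * b.2
def mC (x : Fin 3) (c : Pair) : ℤ := if x = 0 then c.1 else if x = 1 then c.2 else -(c.1 * c.2)

def NN (x : Fin 3) (y : Fin 2) (a b c : Pair) : ℤ :=
  if mA y a = mB x b ∧ (a.1 : ℤ) * a.2 = mC x c then 1 else 0

lemma cast1 (f : Pair → ℤ) :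
    ∑ w : Pair, ((f w : ℝ) / 16) = ((∑ w : Pair, f w : ℤ) : ℝ) / 16 := by
  rw [← Finset.sum_div]; norm_cast

noncomputable def theBox : CabelloBox where
  P x y _ a b c := (NN x y a b c : ℝ) / 16
  nonneg x y z a b c := by
    have h : (0:ℤ) ≤ NN x y a b c := by unfold NN; split <;> norm_num
    have h' : (0:ℝ) ≤ (NN x y a b c : ℝ) := by exact_mod_cast h
    exact div_nonneg h' (by norm_num)
  normalized x y z := by
    simp only [cast1]
    have : ∀ (x : Fin 3) (y : Fin 2),
        ∑ a : Pair, ∑ b : Pair, ∑ c : Pair, NN x y a b c = 16 := by decide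
    rw [this]; norm_num
  nsAB x y z z' a b := by
    have : z = z' := Subsingleton.elim _ _
    rfl
  nsAC x y y' z a c := by
    simp only [cast1]
    have : ∀ (x : Fin 3) (y y' : Fin 2) (a c : Pair),
        ∑ b : Pair, NN x y a b c = ∑ b : Pair, NN x y' a b c := by decide
    rw [this x y y']
  nsBC x x' y z b c := by
    simp only [cast1]
    have : ∀ (x x' : Fin 3) (y : Fin 2) (b c : Pair),
        ∑ a : Pair, NN x y a b c = ∑ a : Pair, NN x' y a b c := by decide
    rw [this x x']
  nsA x y y' z z' a := by
    simp only [cast1]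
    have : ∀ (x : Fin 3) (y y' : Fin 2) (a : Pair),
        ∑ b : Pair, ∑ c : Pair, NN x y a b c = ∑ b : Pair, ∑ c : Pair, NN x y' a b c := by
      decide
    rw [this x y y']
  nsB x x' y z z' b := by
    simp only [cast1]
    have : ∀ (x x' : Fin 3) (y : Fin 2) (b : Pair),
        ∑ a : Pair, ∑ c : Pair, NN x y a b c = ∑ a : Pair, ∑ c : Pair, NN x' y a b c := by
      decide
    rw [this x x']
  nsC x x' y y' z c := by
    simp only [cast1]
    have : ∀ (x x' : Fin 3) (y y' : Fin 2) (c : Pair),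
        ∑ a : Pair, ∑ b : Pair, NN x y a b c = ∑ a : Pair, ∑ b : Pair, NN x' y' a b c := by
      decide
    rw [this x x' y y']

lemma corrAB_eval (x : Fin 3) (y : Fin 2) (i j k l : ℕ) (v : ℤ)
    (h : ∑ a : Pair, ∑ b : Pair, ∑ c : Pair, bits a i j * bits b k l * NN x y a b c = v) :
    theBox.corrAB x y i j k l = (v : ℝ) / 16 := by
  unfold CabelloBox.corrAB theBox
  simp only [← mul_div_assoc, ← Int.cast_mul, cast1, h]

lemma corrAC_eval (x : Fin 3) (i j k l : ℕ) (v : ℤ)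
    (h : ∑ a : Pair, ∑ b : Pair, ∑ c : Pair, bits a i j * bits c k l * NN x 0 a b c = v) :
    theBox.corrAC x i j k l = (v : ℝ) / 16 := by
  unfold CabelloBox.corrAC theBox
  simp only [← mul_div_assoc, ← Int.cast_mul, cast1, h]

/-- There is a tripartite no-signaling box (Alice: three inputs,
Bob: two inputs, Charlie: one input, four outcomes each) attaining the algebraic
maximum `9` of the reduced Cabello Bell expression
`⟨A₁^{10}B₁^{10}⟩ + ⟨A₁^{01}B₂^{10}⟩ + ⟨A₁^{11}C₁^{10}⟩ + ⟨A₂^{10}B₁^{01}⟩ +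
⟨A₂^{01}B₂^{01}⟩ + ⟨A₂^{11}C₁^{01}⟩ + ⟨A₃^{10}B₁^{11}⟩ + ⟨A₃^{01}B₂^{11}⟩ −
⟨A₃^{11}C₁^{11}⟩`, whose classical bound is `7`. -/
theorem cabello_reduced_ns_value_nine :
    ∃ B : CabelloBox,
      B.corrAB 0 0 1 0 1 0 + B.corrAB 0 1 0 1 1 0 + B.corrAC 0 1 1 1 0
        + B.corrAB 1 0 1 0 0 1 + B.corrAB 1 1 0 1 0 1 + B.corrAC 1 1 1 0 1
        + B.corrAB 2 0 1 0 1 1 + B.corrAB 2 1 0 1 1 1 - B.corrAC 2 1 1 1 1 = 9 := by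
  refine ⟨theBox, ?_⟩
  rw [corrAB_eval 0 0 1 0 1 0 16 (by decide),
      corrAB_eval 0 1 0 1 1 0 16 (by decide),
      corrAC_eval 0 1 1 1 0 16 (by decide),
      corrAB_eval 1 0 1 0 0 1 16 (by decide),
      corrAB_eval 1 1 0 1 0 1 16 (by decide),
      corrAC_eval 1 1 1 0 1 16 (by decide),
      corrAB_eval 2 0 1 0 1 1 16 (by decide),
      corrAB_eval 2 1 0 1 1 1 16 (by decide),
      corrAC_eval 2 1 1 1 1 (-16) (by decide)]
  norm_num
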